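/- For every matrix A ∈ SL(2,ℝ) there exist T ∈ SL(2,ℝ), a 2×2 real matrix Y with trace(Y) = 0, and a sign ε ∈ {1,−1}, such that A = ε·T⁻¹·exp(Y)·T. In other words, every element of the real symplectic group Sp(1) = SL(2,ℝ) is, up to sign, conjugate within SL(2,ℝ) to the exponential of a traceless real 2×2 matrix. -/

import Mathlib

open Matrix
open scoped Nat

open NormedSpace in
/-- Exponential of a scalar multiple of an idempotent. -/
lemma exp_smul_idem_aux {𝔸 : Type*} [NormedRing 𝔸] [NormedAlgebra ℂ 𝔸] [CompleteSpace 𝔸]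
    (P : 𝔸) (hP : P * P = P) (t : ℂ) :
    exp (t • P) = 1 + (Complex.exp t - 1) • P := by
  have hPn : ∀ n : ℕ, P ^ (n + 1) = P := by
    intro n
    induction n with
    | zero => simp
    | succ n ih => rw [pow_succ, ih, hP]
  have hsum : Summable fun n : ℕ => (n !⁻¹ : ℂ) • (t • P) ^ n :=
    expSeries_summable' (𝕂 := ℂ) (t • P)
  have hscalar : Summable fun n : ℕ => (n !⁻¹ : ℂ) * t ^ n := by
    simpa [smul_eq_mul] using expSeries_summable' (𝕂 := ℂ) t
  have hscalar' : Summable fun n : ℕ => ((n + 1)!⁻¹ : ℂ) * t ^ (n + 1) := by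
    simpa using (summable_nat_add_iff 1).2 hscalar
  have hterm : ∀ n : ℕ, ((n + 1)!⁻¹ : ℂ) • (t • P) ^ (n + 1)
      = (((n + 1)!⁻¹ : ℂ) * t ^ (n + 1)) • P := by
    intro n
    rw [smul_pow, hPn, smul_smul]
  have hexp : Complex.exp t = ∑' n : ℕ, (n !⁻¹ : ℂ) * t ^ n := by
    rw [Complex.exp_eq_exp_ℂ]
    simp only [exp_eq_tsum ℂ]
    simp [smul_eq_mul]
  simp only [exp_eq_tsum ℂ]
  rw [Summable.tsum_eq_zero_add hsum]
  congr 1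
  · simp
  calc ∑' n : ℕ, ((n + 1)!⁻¹ : ℂ) • (t • P) ^ (n + 1)
      = ∑' n : ℕ, (((n + 1)!⁻¹ : ℂ) * t ^ (n + 1)) • P := tsum_congr hterm
    _ = (∑' n : ℕ, ((n + 1)!⁻¹ : ℂ) * t ^ (n + 1)) • P := Summable.tsum_smul_const hscalar' P
    _ = (Complex.exp t - 1) • P := by
        congr 1
        rw [hexp, Summable.tsum_eq_zero_add hscalar]
        simp

open NormedSpace in
/-- Exponential of a square root of a nonzero scalar. -/
lemma exp_of_sq_aux {𝔸 : Type*} [NormedRing 𝔸] [NormedAlgebra ℂ 𝔸] [CompleteSpace 𝔸]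
    (Y : 𝔸) (c : ℂ) (hc : c ≠ 0) (h : Y * Y = (c * c) • 1) :
    exp Y = ((Complex.exp c + Complex.exp (-c)) / 2) • 1
        + ((Complex.exp c - Complex.exp (-c)) / (2 * c)) • Y := by
  have hZZ : ((2⁻¹ : ℂ) • (1 + c⁻¹ • Y)) * ((2⁻¹ : ℂ) • (1 + c⁻¹ • Y))
      = (2⁻¹ : ℂ) • (1 + c⁻¹ • Y) := by
    simp only [smul_mul_smul_comm, mul_add, add_mul, one_mul, mul_one, h, smul_smul]
    match_scalars <;> field_simp [hc] <;> ring
  have hY : Y = (-c) • (1 : 𝔸) + (2 * c) • ((2⁻¹ : ℂ) • (1 + c⁻¹ • Y)) := by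
    match_scalars <;> field_simp [hc] <;> ring
  conv_lhs => rw [hY]
  let +nondep : NormedAlgebra ℚ 𝔸 := .restrictScalars ℚ ℂ 𝔸
  rw [NormedSpace.exp_add_of_commute (((Commute.one_left _).smul_left _).smul_right _),
    exp_smul_idem_aux 1 (one_mul 1) (-c), exp_smul_idem_aux _ hZZ (2 * c),
    Complex.exp_neg, show Complex.exp (2 * c) = Complex.exp c * Complex.exp c by
      rw [two_mul, Complex.exp_add]]
  simp only [mul_add, add_mul, one_mul, mul_one, smul_mul_smul_comm, smul_mul_assoc,
    mul_smul_comm, smul_smul]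
  match_scalars
  · field_simp
    ring1
  · field_simp
    ring1

open NormedSpace in
/-- Exponential of a square-zero element. -/
lemma exp_of_sq_zero_aux {𝕂 𝔹 : Type*} [RCLike 𝕂] [NormedRing 𝔹] [NormedAlgebra 𝕂 𝔹]
    [CompleteSpace 𝔹] (Y : 𝔹) (h : Y * Y = 0) : exp Y = 1 + Y := by
  simp only [exp_eq_tsum 𝕂]
  rw [tsum_eq_sum (s := {0, 1}) ?_]
  · norm_num [Finset.sum_pair]
  · intro n hn
    simp only [Finset.mem_insert, Finset.mem_singleton] at hn
    obtain ⟨m, rfl⟩ : ∃ m, n = m + 2 := ⟨n - 2, by omega⟩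
    rw [pow_add, pow_two, h, mul_zero, smul_zero]

/-- Complexification of a real 2×2 matrix. -/
noncomputable def mat2C : Matrix (Fin 2) (Fin 2) ℝ →+* Matrix (Fin 2) (Fin 2) ℂ :=
  (Complex.ofRealHom).mapMatrix

lemma mat2C_apply (M : Matrix (Fin 2) (Fin 2) ℝ) (i j : Fin 2) :
    mat2C M i j = (M i j : ℂ) := rfl

lemma mat2C_smul (r : ℝ) (M : Matrix (Fin 2) (Fin 2) ℝ) :
    mat2C (r • M) = (r : ℂ) • mat2C M := by
  ext i j
  simp [mat2C_apply, Matrix.smul_apply]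

lemma mat2C_injective : Function.Injective mat2C :=
  Matrix.map_injective Complex.ofReal_injective

lemma mat2C_continuous : Continuous mat2C :=
  continuous_id.matrix_map Complex.continuous_ofReal

open NormedSpace in
/-- The key computation: the exponential of a suitable traceless multiple equals `B`. -/
lemma exp_real_matrix (B : Matrix (Fin 2) (Fin 2) ℝ) (τ α : ℝ) (hα : α ≠ 0)
    (hCH : B * B = τ • B - 1) (c : ℂ) (hc : c ≠ 0)
    (hsum : Complex.exp c + Complex.exp (-c) = (τ : ℂ))
    (hdiff : (α : ℂ) * (Complex.exp c - Complex.exp (-c)) = 2 * c) :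
    exp (α • (B - (τ / 2) • 1)) = B := by
  letI : NormedRing (Matrix (Fin 2) (Fin 2) ℝ) := Matrix.linftyOpNormedRing
  letI : NormedAlgebra ℝ (Matrix (Fin 2) (Fin 2) ℝ) := Matrix.linftyOpNormedAlgebra
  letI : NormedRing (Matrix (Fin 2) (Fin 2) ℂ) := Matrix.linftyOpNormedRing
  letI : NormedAlgebra ℝ (Matrix (Fin 2) (Fin 2) ℂ) := Matrix.linftyOpNormedAlgebra
  letI : NormedAlgebra ℂ (Matrix (Fin 2) (Fin 2) ℂ) := Matrix.linftyOpNormedAlgebra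
  letI : NormedAlgebra ℚ (Matrix (Fin 2) (Fin 2) ℝ) := Matrix.linftyOpNormedAlgebra
  letI : NormedAlgebra ℚ (Matrix (Fin 2) (Fin 2) ℂ) := Matrix.linftyOpNormedAlgebra
  have huv : Complex.exp c * Complex.exp (-c) = 1 := by
    rw [← Complex.exp_add]; simp
  have hfB : mat2C B * mat2C B = (τ : ℂ) • mat2C B - 1 := by
    have h1 := congrArg mat2C hCH
    rw [_root_.map_mul, _root_.map_sub, _root_.map_one, mat2C_smul] at h1
    exact h1
  have harg : mat2C (α • (B - (τ / 2) • 1))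
      = (α : ℂ) • (mat2C B - ((τ : ℂ) / 2) • 1) := by
    rw [mat2C_smul, _root_.map_sub, mat2C_smul, _root_.map_one]
    push_cast
    rfl
  have hc2 : c * c = (α : ℂ) ^ 2 * ((τ : ℂ) ^ 2 - 4) / 4 := by
    rw [← hsum]
    linear_combination (-(((α : ℂ)) * (Complex.exp c - Complex.exp (-c)) + 2 * c) / 4) * hdiff
      - (α : ℂ) ^ 2 * huv
  have hYY : ((α : ℂ) • (mat2C B - ((τ : ℂ) / 2) • 1))
      * ((α : ℂ) • (mat2C B - ((τ : ℂ) / 2) • 1)) = (c * c) • 1 := by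
    simp only [smul_mul_smul_comm, sub_mul, mul_sub, smul_mul_assoc, mul_smul_comm,
      one_mul, mul_one, smul_smul, hfB]
    match_scalars
    · ring1
    · linear_combination -hc2
  apply mat2C_injective
  erw [map_exp mat2C mat2C_continuous]
  rw [harg,
    exp_of_sq_aux _ c hc hYY]
  match_scalars
  · field_simp
    linear_combination 2 * c * hsum - (τ : ℂ) * hdiff
  · field_simp
    linear_combination hdiff

open NormedSpace in
/-- Any `B ∈ SL(2,ℝ)` with trace `> -2` is the exponential of a traceless matrix. -/
lemma exp_of_sl2_trace_gt (B : Matrix (Fin 2) (Fin 2) ℝ) (hdet : B.det = 1)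
    (hτ : -2 < B.trace) :
    ∃ Y : Matrix (Fin 2) (Fin 2) ℝ, Y.trace = 0 ∧ exp Y = B := by
  have hCH : B * B = B.trace • B - 1 := by
    rw [Matrix.det_fin_two] at hdet
    ext i j
    fin_cases i <;> fin_cases j <;>
      simp [Matrix.mul_apply, Fin.sum_univ_two, Matrix.trace_fin_two, Matrix.one_apply,
        Matrix.smul_apply, Matrix.sub_apply] <;>
      first | ring1 | linear_combination -hdet
  set τ := B.trace with hτdef
  have htrY : ∀ β : ℝ, (β • (B - (τ / 2) • (1 : Matrix (Fin 2) (Fin 2) ℝ))).trace = 0 := by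
    intro β
    simp [Matrix.trace_smul, Matrix.trace_sub, Matrix.trace_one, ← hτdef, smul_eq_mul]
    try ring
  rcases lt_trichotomy τ 2 with h2 | h2 | h2
  · -- elliptic case: -2 < τ < 2
    set γ := Real.arccos (τ / 2) with hγdef
    have hcos : Real.cos γ = τ / 2 := Real.cos_arccos (by linarith) (by linarith)
    have hγpos : 0 < γ := Real.arccos_pos.2 (by linarith)
    have hsin : 0 < Real.sin γ := by
      rw [hγdef, Real.sin_arccos]
      apply Real.sqrt_pos.2
      nlinarith
    have e1 : Complex.exp (↑γ * Complex.I)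
        = ((τ / 2 : ℝ) : ℂ) + ((Real.sin γ : ℝ) : ℂ) * Complex.I := by
      rw [Complex.exp_mul_I, ← Complex.ofReal_cos, ← Complex.ofReal_sin, hcos]
    have e2 : Complex.exp (-(↑γ * Complex.I))
        = ((τ / 2 : ℝ) : ℂ) - ((Real.sin γ : ℝ) : ℂ) * Complex.I := by
      rw [show -(↑γ * Complex.I) = ((-γ : ℝ) : ℂ) * Complex.I by push_cast; ring,
        Complex.exp_mul_I, ← Complex.ofReal_cos, ← Complex.ofReal_sin, Real.cos_neg,
        Real.sin_neg, hcos]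
      push_cast
      ring
    refine ⟨(γ / Real.sin γ) • (B - (τ / 2) • 1), htrY _, ?_⟩
    apply exp_real_matrix B τ _ (ne_of_gt (div_pos hγpos hsin)) hCH (↑γ * Complex.I)
      (mul_ne_zero (Complex.ofReal_ne_zero.2 hγpos.ne') Complex.I_ne_zero)
    · rw [e1, e2]
      push_cast
      ring
    · have hs0 : Complex.sin ↑γ ≠ 0 := Complex.ofReal_sin γ ▸ Complex.ofReal_ne_zero.2 hsin.ne'
      rw [e1, e2, Complex.ofReal_div]
      field_simp [hs0]
      try ring1
  · -- parabolic case: τ = 2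
    refine ⟨B - 1, ?_, ?_⟩
    · simp [Matrix.trace_sub, Matrix.trace_one, ← hτdef, h2]
    · have hsq : (B - 1) * (B - 1) = 0 := by
        have hexp2 : (B - 1) * (B - 1) = B * B - B - B + 1 := by noncomm_ring
        rw [hexp2, hCH, h2, two_smul]
        abel
      letI : NormedRing (Matrix (Fin 2) (Fin 2) ℝ) := Matrix.linftyOpNormedRing
      letI : NormedAlgebra ℝ (Matrix (Fin 2) (Fin 2) ℝ) := Matrix.linftyOpNormedAlgebra
      erw [exp_of_sq_zero_aux (𝕂 := ℝ) _ hsq]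
      abel
  · -- hyperbolic case: τ > 2
    set s := Real.sqrt (τ ^ 2 - 4) with hsdef
    have hs2 : s ^ 2 = τ ^ 2 - 4 := Real.sq_sqrt (by nlinarith)
    have hs : 0 < s := Real.sqrt_pos.2 (by nlinarith)
    set a := (τ + s) / 2 with hadef
    have ha1 : 1 < a := by rw [hadef]; linarith
    have ha0 : 0 < a := by linarith
    have hainv : a⁻¹ = (τ - s) / 2 := by
      apply inv_eq_of_mul_eq_one_right
      rw [hadef]
      linear_combination (-(1 : ℝ) / 4) * hs2
    set L := Real.log a with hLdef
    have hL : 0 < L := Real.log_pos ha1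
    have eL : Complex.exp ↑L = (a : ℂ) := by
      rw [← Complex.ofReal_exp, hLdef, Real.exp_log ha0]
    have eL' : Complex.exp (-↑L) = (((τ - s) / 2 : ℝ) : ℂ) := by
      rw [show -(↑L : ℂ) = ((-L : ℝ) : ℂ) by push_cast; ring, ← Complex.ofReal_exp,
        Real.exp_neg, hLdef, Real.exp_log ha0, hainv]
    refine ⟨(2 * L / s) • (B - (τ / 2) • 1), htrY _, ?_⟩
    apply exp_real_matrix B τ _ (ne_of_gt (div_pos (mul_pos two_pos hL) hs)) hCH (↑L : ℂ)
      (Complex.ofReal_ne_zero.2 hL.ne')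
    · rw [eL, eL', hadef]
      push_cast
      try ring
    · rw [eL, eL', hadef]
      have hsne : (s : ℂ) ≠ 0 := Complex.ofReal_ne_zero.2 hs.ne'
      push_cast
      field_simp
      try ring

/-- Every element of `Sp(1) = SL(2,ℝ)` is, up to sign, conjugate within `SL(2,ℝ)` to the
exponential of a traceless real `2×2` matrix: `A = ε·T⁻¹·exp(Y)·T` with `det T = 1`,
`trace Y = 0` and `ε ∈ {1, -1}`. -/
theorem sl2_eq_sign_conj_exp_traceless
    (A : Matrix (Fin 2) (Fin 2) ℝ) (hA : A.det = 1) :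
    ∃ (T Y : Matrix (Fin 2) (Fin 2) ℝ) (ε : ℝ),
      (ε = 1 ∨ ε = -1) ∧ T.det = 1 ∧ Y.trace = 0 ∧
      A = ε • (T⁻¹ * NormedSpace.exp Y * T) := by
  by_cases hτ : -2 < A.trace
  · obtain ⟨Y, hY0, hYexp⟩ := exp_of_sl2_trace_gt A hA hτ
    exact ⟨1, Y, 1, Or.inl rfl, Matrix.det_one, hY0, by
      rw [inv_one, one_mul, mul_one, hYexp, one_smul]⟩
  · have hτ' : -2 < (-A).trace := by
      rw [Matrix.trace_neg]
      push_neg at hτ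
      linarith
    have hdet : (-A).det = 1 := by
      rw [Matrix.det_neg, hA]
      norm_num
    obtain ⟨Y, hY0, hYexp⟩ := exp_of_sl2_trace_gt (-A) hdet hτ'
    refine ⟨1, Y, -1, Or.inr rfl, Matrix.det_one, hY0, ?_⟩
    rw [inv_one, one_mul, mul_one, hYexp, neg_smul, one_smul, neg_neg]
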